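/- If the word w1 = w1' · w · w1'' has period p1 and w2 = w2' · w · w2'' has period p2 with the shared factor w of length at least p1 + p2 - gcd(p1,p2), then both w1 and w2 have period gcd(p1,p2). -/

import Mathlib

/-- A word `w` has period `p` if letters at distance `p` coincide. -/
def HasPeriod {α : Type*} (w : List α) (p : ℕ) : Prop :=
  ∀ i, i + p < w.length → w[i]? = w[i + p]?

namespace FWaux

lemma hasPeriod_mul {α : Type*} {u : List α} {p : ℕ} (h : HasPeriod u p) :
    ∀ k i, i + k * p < u.length → u[i]? = u[i + k * p]? := by
  intro k
  induction k with
  | zero => simp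
  | succ k ih =>
    intro i hi
    have hk : i + k * p < u.length := by
      have : k * p ≤ (k + 1) * p := Nat.mul_le_mul_right _ (Nat.le_succ k)
      omega
    have h2 : i + k * p + p < u.length := by
      have : (k + 1) * p = k * p + p := Nat.succ_mul k p
      omega
    calc u[i]? = u[i + k * p]? := ih i hk
      _ = u[i + k * p + p]? := h _ h2
      _ = u[i + (k + 1) * p]? := by rw [Nat.succ_mul]; ring_nf

lemma eq_of_mod {α : Type*} {u : List α} {p : ℕ} (h : HasPeriod u p) (hp : 1 ≤ p)
    {i j : ℕ} (hij : i % p = j % p) (hi : i < u.length) (hj : j < u.length) :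
    u[i]? = u[j]? := by
  rcases le_total i j with hle | hle
  · have hd : p ∣ j - i := (Nat.modEq_iff_dvd' hle).mp hij
    obtain ⟨k, hk⟩ := hd
    rw [Nat.mul_comm] at hk
    have : j = i + k * p := by omega
    subst this
    exact hasPeriod_mul h k i hj
  · have hd : p ∣ i - j := (Nat.modEq_iff_dvd' hle).mp hij.symm
    obtain ⟨k, hk⟩ := hd
    rw [Nat.mul_comm] at hk
    have : i = j + k * p := by omega
    subst this
    exact (hasPeriod_mul h k j hi).symm

lemma window_mul {α : Type*} {u : List α} {g a L : ℕ}
    (hw : ∀ i, a ≤ i → i + g < a + L → u[i]? = u[i + g]?) :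
    ∀ k i, a ≤ i → i + k * g < a + L → u[i]? = u[i + k * g]? := by
  intro k
  induction k with
  | zero => simp
  | succ k ih =>
    intro i hai hi
    have hmul : k * g ≤ (k + 1) * g := Nat.mul_le_mul_right _ (Nat.le_succ k)
    have hsm : (k + 1) * g = k * g + g := Nat.succ_mul k g
    have hk : i + k * g < a + L := by omega
    calc u[i]? = u[i + k * g]? := ih i hai hk
      _ = u[i + k * g + g]? := hw _ (by omega) (by omega)
      _ = u[i + (k + 1) * g]? := by rw [hsm]; ring_nf

/-- Propagation: if `u` has period `p`, and a window `[a, a+L)` of length `L ≥ p`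
has period `g` with `g ∣ p`, then all of `u` has period `g`. -/
lemma propagate {α : Type*} (u : List α) (p g a L : ℕ)
    (hg : 1 ≤ g) (hgp : g ∣ p) (hp : 1 ≤ p) (hpL : p ≤ L) (haL : a + L ≤ u.length)
    (hper : HasPeriod u p)
    (hw : ∀ i, a ≤ i → i + g < a + L → u[i]? = u[i + g]?) :
    HasPeriod u g := by
  have hgle : g ≤ p := Nat.le_of_dvd hp hgp
  intro i hi
  have hap : a * p ≥ a := Nat.le_mul_of_pos_right a hp
  set d := i + a * p - a with hd
  set j := a + d % p with hj
  have hjmod : j % p = i % p := by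
    have h1 : (a + d % p) % p = (a + d) % p := by
      rw [Nat.add_mod, Nat.mod_mod_of_dvd d (dvd_refl p), ← Nat.add_mod]
    have h2 : a + d = i + a * p := by omega
    rw [hj, h1, h2, Nat.add_mul_mod_self_right]
  have hdp : d % p < p := Nat.mod_lt _ hp
  have haj : a ≤ j := by omega
  have hjlt : j < a + p := by omega
  have hjn : j < u.length := by omega
  have hin : i < u.length := by omega
  have e1 : u[i]? = u[j]? := eq_of_mod hper hp hjmod.symm hin hjn
  by_cases hcase : j + g < a + p
  · have e2 : u[i + g]? = u[j + g]? := by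
      apply eq_of_mod hper hp _ hi (by omega)
      rw [Nat.add_mod, Nat.add_mod (j), hjmod]
    have e3 : u[j]? = u[j + g]? := hw j haj (by omega)
    rw [e1, e3, ← e2]
  · set j' := j + g - p with hj'
    have haj' : a ≤ j' := by omega
    have hj'lt : j' < a + g := by omega
    have e2 : u[i + g]? = u[j']? := by
      apply eq_of_mod hper hp _ hi (by omega)
      have : j' + p = j + g := by omega
      have h3 : j' % p = (j + g) % p := by
        rw [← this, Nat.add_mod_right]
      rw [h3, Nat.add_mod, Nat.add_mod j, hjmod]
    have hdvd : g ∣ p - g := (Nat.dvd_sub hgp (dvd_refl g))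
    obtain ⟨k, hk⟩ := hdvd
    rw [Nat.mul_comm] at hk
    have hjj' : j = j' + k * g := by omega
    have e3 : u[j']? = u[j]? := by
      rw [hjj']
      exact window_mul hw k j' haj' (by omega)
    rw [e1, ← e3, ← e2]

lemma factor_get {α : Type*} (x w y : List α) {i : ℕ} (hi : i < w.length) :
    (x ++ w ++ y)[x.length + i]? = w[i]? := by
  rw [List.append_assoc, List.getElem?_append_right (by omega)]
  simp only [Nat.add_sub_cancel_left]
  exact List.getElem?_append_left hi

lemma factor_period {α : Type*} {x w y : List α} {p : ℕ}
    (h : HasPeriod (x ++ w ++ y) p) : HasPeriod w p := by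
  intro i hi
  have hlen : (x ++ w ++ y).length = x.length + w.length + y.length := by simp; omega
  have h1 := factor_get x w y (show i < w.length by omega)
  have h2 := factor_get x w y hi
  have h3 := h (x.length + i) (by omega)
  rw [← h1, ← h2, Nat.add_assoc] at *
  exact h3

lemma take_period {α : Type*} {w : List α} {p m : ℕ}
    (h : HasPeriod w p) : HasPeriod (w.take m) p := by
  intro i hi
  have hlen : (w.take m).length ≤ w.length := by simp
  have hlm : (w.take m).length ≤ m := by simp
  rw [List.getElem?_take_of_lt (by omega), List.getElem?_take_of_lt (by omega)]
  exact h i (by omega)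

/-- Fine–Wilf: a word with periods `p1` and `p2` of length at least
`p1 + p2 - gcd p1 p2` has period `gcd p1 p2`. -/
lemma fine_wilf {α : Type*} :
    ∀ n p1 p2 (w : List α), p1 + p2 ≤ n → 1 ≤ p1 → 1 ≤ p2 →
      HasPeriod w p1 → HasPeriod w p2 →
      p1 + p2 - Nat.gcd p1 p2 ≤ w.length → HasPeriod w (Nat.gcd p1 p2) := by
  intro n
  induction n using Nat.strong_induction_on with
  | _ n ih =>
    intro p1 p2 w hn h1 h2 hp1 hp2 hlen
    have hg1 : 1 ≤ Nat.gcd p1 p2 := Nat.gcd_pos_of_pos_left _ h1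
    have hgle1 : Nat.gcd p1 p2 ≤ p1 := Nat.le_of_dvd h1 (Nat.gcd_dvd_left _ _)
    have hgle2 : Nat.gcd p1 p2 ≤ p2 := Nat.le_of_dvd h2 (Nat.gcd_dvd_right _ _)
    rcases lt_trichotomy p1 p2 with hlt | heq | hlt
    · -- p1 < p2 : reduce to (p2 - p1, p1)
      set g := Nat.gcd p1 p2 with hgdef
      have hgd : Nat.gcd (p2 - p1) p1 = g := by
        rw [Nat.gcd_sub_self_left (le_of_lt hlt), Nat.gcd_comm]
      have hdvd : g ∣ p2 - p1 := Nat.dvd_sub (Nat.gcd_dvd_right _ _) (Nat.gcd_dvd_left _ _)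
      have hge : p1 + g ≤ p2 := by
        have := Nat.le_of_dvd (by omega) hdvd
        omega
      set u := w.take (w.length - p1) with hu
      have hwlen : p2 ≤ w.length := by omega
      have hulen : u.length = w.length - p1 := by
        simp [hu]
      have hup1 : HasPeriod u p1 := take_period hp1
      have hup21 : HasPeriod u (p2 - p1) := by
        intro i hi
        have hi' : i + p2 < w.length := by omega
        have hiu : i < u.length := by omega
        rw [List.getElem?_take_of_lt (by omega), List.getElem?_take_of_lt (by omega)]
        calc w[i]? = w[i + p2]? := hp2 i hi'
          _ = w[i + (p2 - p1)]? := by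
              have : i + (p2 - p1) + p1 = i + p2 := by omega
              rw [← this]; exact (hp1 _ (by omega)).symm
      have hu1 : HasPeriod u g := by
        have := ih p2 (by omega) (p2 - p1) p1 u (by omega) (by omega) h1 hup21 hup1
          (by rw [hgd]; omega)
        rwa [hgd] at this
      -- propagate back to w using period p1, window [0, u.length)
      apply propagate w p1 g 0 u.length hg1 (Nat.gcd_dvd_left _ _) h1 (by omega) (by omega) hp1
      intro i _ hilt
      have h1' := List.getElem?_take_of_lt (l := w) (show i < w.length - p1 by omega)
      have h2' := List.getElem?_take_of_lt (l := w) (show i + g < w.length - p1 by omega)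
      rw [← hu] at h1' h2'
      rw [← h1', ← h2']
      exact hu1 i (by omega)
    · subst heq
      rwa [Nat.gcd_self]
    · -- p2 < p1 : reduce to (p1 - p2, p2)
      set g := Nat.gcd p1 p2 with hgdef
      have hgd : Nat.gcd (p1 - p2) p2 = g := Nat.gcd_sub_self_left (le_of_lt hlt)
      have hdvd : g ∣ p1 - p2 := Nat.dvd_sub (Nat.gcd_dvd_left _ _) (Nat.gcd_dvd_right _ _)
      have hge : p2 + g ≤ p1 := by
        have := Nat.le_of_dvd (by omega) hdvd
        omega
      set u := w.take (w.length - p2) with hu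
      have hwlen : p1 ≤ w.length := by omega
      have hulen : u.length = w.length - p2 := by
        simp [hu]
      have hup2 : HasPeriod u p2 := take_period hp2
      have hup12 : HasPeriod u (p1 - p2) := by
        intro i hi
        have hi' : i + p1 < w.length := by omega
        have hiu : i < u.length := by omega
        rw [List.getElem?_take_of_lt (by omega), List.getElem?_take_of_lt (by omega)]
        calc w[i]? = w[i + p1]? := hp1 i hi'
          _ = w[i + (p1 - p2)]? := by
              have : i + (p1 - p2) + p2 = i + p1 := by omega
              rw [← this]; exact (hp2 _ (by omega)).symm
      have hu1 : HasPeriod u g := by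
        have := ih p1 (by omega) (p1 - p2) p2 u (by omega) (by omega) h2 hup12 hup2
          (by rw [hgd]; omega)
        rwa [hgd] at this
      apply propagate w p2 g 0 u.length hg1 (Nat.gcd_dvd_right _ _) h2 (by omega) (by omega) hp2
      intro i _ hilt
      have h1' := List.getElem?_take_of_lt (l := w) (show i < w.length - p2 by omega)
      have h2' := List.getElem?_take_of_lt (l := w) (show i + g < w.length - p2 by omega)
      rw [← hu] at h1' h2'
      rw [← h1', ← h2']
      exact hu1 i (by omega)

end FWaux

/-- If `w1 = w1' · w · w1''` has period `p1`, `w2 = w2' · w · w2''` has period `p2`,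
and the shared factor `w` has length at least `p1 + p2 - gcd(p1,p2)`,
then both `w1` and `w2` have period `gcd(p1,p2)`. -/
theorem fine_wilf_shared_factor {α : Type*} (w1' w w1'' w2' w2'' : List α) (p1 p2 : ℕ)
    (hp1 : 1 ≤ p1) (hp2 : 1 ≤ p2)
    (h1 : HasPeriod (w1' ++ w ++ w1'') p1)
    (h2 : HasPeriod (w2' ++ w ++ w2'') p2)
    (hlen : p1 + p2 - Nat.gcd p1 p2 ≤ w.length) :
    HasPeriod (w1' ++ w ++ w1'') (Nat.gcd p1 p2) ∧
    HasPeriod (w2' ++ w ++ w2'') (Nat.gcd p1 p2) := by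
  set g := Nat.gcd p1 p2 with hgdef
  have hg1 : 1 ≤ g := Nat.gcd_pos_of_pos_left _ hp1
  have hgle1 : g ≤ p1 := Nat.le_of_dvd hp1 (Nat.gcd_dvd_left _ _)
  have hgle2 : g ≤ p2 := Nat.le_of_dvd hp2 (Nat.gcd_dvd_right _ _)
  have hw1 : HasPeriod w p1 := FWaux.factor_period h1
  have hw2 : HasPeriod w p2 := FWaux.factor_period h2
  have hwg : HasPeriod w g := FWaux.fine_wilf (p1 + p2) p1 p2 w le_rfl hp1 hp2 hw1 hw2 hlen
  constructor
  · apply FWaux.propagate (w1' ++ w ++ w1'') p1 g w1'.length w.length hg1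
      (Nat.gcd_dvd_left _ _) hp1 (by omega) (by simp) h1
    intro i hai hilt
    obtain ⟨i', rfl⟩ := Nat.exists_eq_add_of_le hai
    rw [FWaux.factor_get w1' w w1'' (show i' < w.length by omega), Nat.add_assoc,
      FWaux.factor_get w1' w w1'' (show i' + g < w.length by omega)]
    exact hwg i' (by omega)
  · apply FWaux.propagate (w2' ++ w ++ w2'') p2 g w2'.length w.length hg1
      (Nat.gcd_dvd_right _ _) hp2 (by omega) (by simp) h2
    intro i hai hilt
    obtain ⟨i', rfl⟩ := Nat.exists_eq_add_of_le hai
    rw [FWaux.factor_get w2' w w2'' (show i' < w.length by omega), Nat.add_assoc,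
      FWaux.factor_get w2' w w2'' (show i' + g < w.length by omega)]
    exact hwg i' (by omega)
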